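/- Let Γ be a nonempty closed subset of ℝ^d and let x ∈ ℝ^d with x ∉ Γ. If the function y ↦ dist(y, Γ) is (Fréchet) differentiable at x, then its derivative at x has operator norm equal to 1; consequently the signed distance function of a nonempty bounded open set Ω₁ satisfies the Eikonal equation ‖∇φ(x)‖₂ = 1 at every point x ∉ frontier(Ω₁) where φ is differentiable. -/

import Mathlib

open Classical in
noncomputable def sdf {d : ℕ} (Ω : Set (EuclideanSpace ℝ (Fin d)))
    (x : EuclideanSpace ℝ (Fin d)) : ℝ :=
  if x ∈ Ω then -(Metric.infDist x (frontier Ω)) else Metric.infDist x (frontier Ω)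

open Metric Set

lemma key_stmt16 {d : ℕ} (Γ : Set (EuclideanSpace ℝ (Fin d)))
    (hne : Γ.Nonempty) (hcl : IsClosed Γ)
    (x : EuclideanSpace ℝ (Fin d)) (hx : x ∉ Γ)
    (f' : EuclideanSpace ℝ (Fin d) →L[ℝ] ℝ)
    (hf : HasFDerivAt (fun y => Metric.infDist y Γ) f' x) : ‖f'‖ = 1 := by
  set D := infDist x Γ with hDdef
  have hD : 0 < D := (hcl.notMem_iff_infDist_pos hne).mp hx
  obtain ⟨z, hzΓ, hdz⟩ := hcl.exists_infDist_eq_dist hne x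
  set v : EuclideanSpace ℝ (Fin d) := D⁻¹ • (z - x) with hv
  have hzx : ‖z - x‖ = D := by
    rw [norm_sub_rev, ← dist_eq_norm]; exact hdz.symm
  have hnv : ‖v‖ = 1 := by
    rw [hv, norm_smul, hzx, norm_inv, Real.norm_eq_abs, abs_of_pos hD, inv_mul_cancel₀ hD.ne']
  have hDv : D • v = z - x := by
    rw [hv, smul_smul, mul_inv_cancel₀ hD.ne', one_smul]
  have hc : ∀ t : ℝ, HasDerivAt (fun t : ℝ => x + t • v) v t := by
    intro t
    simpa using (hasDerivAt_id t |>.smul_const v).const_add x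
  have hg : HasDerivAt (fun t : ℝ => infDist (x + t • v) Γ) (f' v) 0 := by
    have h0 : x + (0:ℝ) • v = x := by simp
    have hf2 := hf
    rw [← h0] at hf2
    exact hf2.comp_hasDerivAt 0 (hc 0)
  have heq : ∀ t ∈ Icc (0:ℝ) D, infDist (x + t • v) Γ = D - t := by
    intro t ht
    have h1 : infDist (x + t • v) Γ ≤ D - t := by
      have : dist (x + t • v) z = D - t := by
        rw [dist_eq_norm]
        have : x + t • v - z = (t - D) • v := by
          rw [sub_smul, hDv]; abel
        rw [this, norm_smul, hnv, mul_one, Real.norm_eq_abs, abs_of_nonpos (by linarith [ht.2])]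
        ring
      calc infDist (x + t • v) Γ ≤ dist (x + t • v) z := infDist_le_dist_of_mem hzΓ
        _ = D - t := this
    have h2 : D - t ≤ infDist (x + t • v) Γ := by
      have := infDist_le_infDist_add_dist (x := x) (y := x + t • v) (s := Γ)
      have hd : dist x (x + t • v) = t := by
        rw [dist_eq_norm]
        simp [norm_smul, hnv, abs_of_nonneg ht.1]
      rw [hd] at this
      linarith [this]
    linarith
  have hmem : Icc (0:ℝ) D ∈ nhdsWithin 0 (Ici (0:ℝ)) := Icc_mem_nhdsGE hD
  have hg1 : HasDerivWithinAt (fun t : ℝ => infDist (x + t • v) Γ) (f' v) (Ici 0) 0 :=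
    hg.hasDerivWithinAt
  have hg2 : HasDerivWithinAt (fun t : ℝ => D - t) (f' v) (Ici 0) 0 := by
    refine hg1.congr_of_eventuallyEq ?_ ?_
    · filter_upwards [hmem] with t ht using (heq t ht).symm
    · simpa using (heq 0 ⟨le_refl _, hD.le⟩).symm
  have hg3 : HasDerivWithinAt (fun t : ℝ => D - t) (-1) (Ici (0:ℝ)) 0 :=
    ((hasDerivAt_id (0:ℝ)).const_sub D).hasDerivWithinAt
  have huniq : f' v = -1 := by
    have := (uniqueDiffOn_Ici (0:ℝ) 0 Set.self_mem_Ici).eq hg2.hasFDerivWithinAt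
      hg3.hasFDerivWithinAt
    have := congrArg (fun L : ℝ →L[ℝ] ℝ => L 1) this
    simpa using this
  have hub : ‖f'‖ ≤ 1 := by
    have := hf.le_of_lipschitz (lipschitz_infDist_pt Γ)
    simpa using this
  have hlb : 1 ≤ ‖f'‖ := by
    have := f'.le_opNorm v
    rw [huniq, hnv, mul_one] at this
    simpa using this
  linarith

/-- if the distance function to a nonempty closed set `Γ` is
differentiable at a point `x ∉ Γ`, its derivative has norm `1`; consequently the SDF of
a nonempty bounded open set satisfies the Eikonal equation `‖∇φ‖ = 1` wherever it is
differentiable off the frontier. -/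
theorem stmt_16 {d : ℕ} (Γ : Set (EuclideanSpace ℝ (Fin d)))
    (hne : Γ.Nonempty) (hcl : IsClosed Γ)
    (x : EuclideanSpace ℝ (Fin d)) (hx : x ∉ Γ)
    (f' : EuclideanSpace ℝ (Fin d) →L[ℝ] ℝ)
    (hf : HasFDerivAt (fun y => Metric.infDist y Γ) f' x) :
    ‖f'‖ = 1 ∧
      ∀ (Ω₁ : Set (EuclideanSpace ℝ (Fin d))), Ω₁.Nonempty →
        Bornology.IsBounded Ω₁ → IsOpen Ω₁ →
        ∀ y ∉ frontier Ω₁, ∀ g' : EuclideanSpace ℝ (Fin d) →L[ℝ] ℝ,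
          HasFDerivAt (sdf Ω₁) g' y → ‖g'‖ = 1 := by
  refine ⟨key_stmt16 Γ hne hcl x hx f' hf, ?_⟩
  intro Ω₁ hΩne hΩb hΩo y hy g' hg
  obtain ⟨z, hzΓ⟩ := hne
  have hnt : Nontrivial (EuclideanSpace ℝ (Fin d)) :=
    ⟨⟨x, z, fun h => hx (h ▸ hzΓ)⟩⟩
  -- frontier is nonempty
  have hFne : (frontier Ω₁).Nonempty := by
    by_contra hF
    rw [Set.not_nonempty_iff_eq_empty] at hF
    have hclopen : IsClopen Ω₁ := isClopen_iff_frontier_eq_empty.mpr hF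
    rcases isClopen_iff.mp hclopen with h | h
    · exact hΩne.ne_empty h
    · exact NormedSpace.unbounded_univ ℝ _ (h ▸ hΩb)
  have hFcl : IsClosed (frontier Ω₁) := isClosed_frontier
  by_cases hyΩ : y ∈ Ω₁
  · -- sdf = -infDist near y
    have hev : sdf Ω₁ =ᶠ[nhds y] fun w => -(infDist w (frontier Ω₁)) := by
      filter_upwards [hΩo.mem_nhds hyΩ] with w hw
      simp [sdf, hw]
    have hg2 : HasFDerivAt (fun w => -(infDist w (frontier Ω₁))) g' y :=
      hg.congr_of_eventuallyEq hev.symm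
    have hg3 : HasFDerivAt (fun w => infDist w (frontier Ω₁)) (-g') y := by
      exact hg2.neg.congr_of_eventuallyEq (Filter.Eventually.of_forall fun w => by simp)
    have := key_stmt16 (frontier Ω₁) hFne hFcl y hy (-g') hg3
    simpa using this
  · -- y ∉ closure Ω₁
    have hyc : y ∉ closure Ω₁ := by
      intro hc
      exact hy ⟨hc, by simpa [hΩo.interior_eq] using hyΩ⟩
    have hev : sdf Ω₁ =ᶠ[nhds y] fun w => infDist w (frontier Ω₁) := by
      filter_upwards [isClosed_closure.isOpen_compl.mem_nhds hyc] with w hw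
      have : w ∉ Ω₁ := fun h => hw (subset_closure h)
      simp [sdf, this]
    have hg2 : HasFDerivAt (fun w => infDist w (frontier Ω₁)) g' y :=
      hg.congr_of_eventuallyEq hev.symm
    exact key_stmt16 (frontier Ω₁) hFne hFcl y hy g' hg2
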